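/- arXiv:2303.00993 — 6 statements merged into one kernel-verified Lean document; each statement's English description precedes it below -/
import Mathlib

section
/- If Γ₁ and Γ₂ are sets of nonnegative real numbers satisfying the ACC, then the product set Γ₁ · Γ₂ = {xy : x ∈ Γ₁, y ∈ Γ₂} satisfies the ACC. -/
def IsDCC (S : Set ℝ) : Prop :=
  ∀ f : ℕ → ℝ, (∀ n, f n ∈ S) → Antitone f → ∃ N, ∀ n, N ≤ n → f n = f N

def IsACC (S : Set ℝ) : Prop :=
  ∀ f : ℕ → ℝ, (∀ n, f n ∈ S) → Monotone f → ∃ N, ∀ n, N ≤ n → f n = f N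

lemma acc_antitone_subseq {S : Set ℝ} (hS : IsACC S) (f : ℕ → ℝ) (hf : ∀ n, f n ∈ S) :
    ∃ g : ℕ → ℕ, StrictMono g ∧ Antitone (f ∘ g) := by
  have hWF : Set.IsWF (OrderDual.ofDual ⁻¹' S : Set ℝᵒᵈ) := by
    rw [Set.isWF_iff_no_descending_seq]
    intro u hu hmem
    have hmono : StrictMono (fun n => OrderDual.ofDual (u n) : ℕ → ℝ) := by
      intro a b hab
      exact hu hab
    obtain ⟨N, hN⟩ := hS (fun n => OrderDual.ofDual (u n)) (fun n => hmem n) hmono.monotone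
    have := hN (N + 1) (Nat.le_succ N)
    exact absurd this (ne_of_gt (hmono (Nat.lt_succ_self N)))
  have hPWO := hWF.isPWO
  obtain ⟨g, hg⟩ := hPWO.exists_monotone_subseq (f := fun n => OrderDual.toDual (f n))
    (fun n => hf n)
  refine ⟨g, g.strictMono, fun a b hab => ?_⟩
  exact hg hab

theorem acc_mul (Γ₁ Γ₂ : Set ℝ) (h1 : ∀ x ∈ Γ₁, 0 ≤ x) (h2 : ∀ x ∈ Γ₂, 0 ≤ x)
    (hA1 : IsACC Γ₁) (hA2 : IsACC Γ₂) :
    IsACC {z : ℝ | ∃ x ∈ Γ₁, ∃ y ∈ Γ₂, z = x * y} := by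
  intro f hf hmono
  choose x hx y hy hxy using hf
  obtain ⟨g, hgmono, hxg⟩ := acc_antitone_subseq hA1 x hx
  obtain ⟨g', hg'mono, hyg⟩ := acc_antitone_subseq hA2 (y ∘ g) (fun n => hy (g n))
  set φ : ℕ → ℕ := g ∘ g' with hφ
  have hφmono : StrictMono φ := hgmono.comp hg'mono
  -- f ∘ φ is antitone: product of nonneg antitone sequences
  have hanti : Antitone (f ∘ φ) := by
    intro a b hab
    simp only [Function.comp_apply, hxy]
    exact mul_le_mul (hxg (hg'mono.monotone hab)) (hyg hab)
      (h2 _ (hy _)) (h1 _ (hx _))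
  -- f ∘ φ is also monotone, hence constant
  have hconst : ∀ n, f (φ n) = f (φ 0) := fun n =>
    le_antisymm (hanti (Nat.zero_le n)) (hmono (hφmono.monotone (Nat.zero_le n)))
  refine ⟨φ 0, fun n hn => ?_⟩
  have h1' : f (φ 0) ≤ f n := hmono hn
  have h2' : f n ≤ f (φ 0) := by
    calc f n ≤ f (φ n) := hmono (hφmono.le_apply)
    _ = f (φ 0) := hconst n
  exact le_antisymm h2' h1'
end

section
/- If I and J are sets of nonnegative real numbers satisfying the DCC, then the product set I · J = {xy : x ∈ I, y ∈ J} satisfies the DCC. -/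
lemma isWF_of_dcc {S : Set ℝ} (h : IsDCC S) : S.IsWF := by
  rw [Set.isWF_iff_no_descending_seq]
  intro f hf hmem
  obtain ⟨N, hN⟩ := h f (fun n => hmem n) hf.antitone
  have := hN (N + 1) (by omega)
  exact absurd this (ne_of_lt (hf (Nat.lt_succ_self N)))

lemma dcc_of_isWF {S : Set ℝ} (h : S.IsWF) : IsDCC S := by
  intro f hf hanti
  have hsub : (Set.range f).IsWF := h.mono (Set.range_subset_iff.2 hf)
  have hne : (Set.range f).Nonempty := ⟨f 0, 0, rfl⟩
  obtain ⟨N, hN⟩ := hsub.min_mem hne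
  refine ⟨N, fun n hn => ?_⟩
  have h1 : f n ≤ f N := hanti hn
  have h2 : ¬ f n < hsub.min hne := hsub.not_lt_min hne ⟨n, rfl⟩
  rw [← hN] at h2
  exact le_antisymm h1 (not_lt.1 h2)

theorem dcc_mul (I J : Set ℝ) (hI0 : ∀ x ∈ I, 0 ≤ x) (hJ0 : ∀ x ∈ J, 0 ≤ x)
    (hI : IsDCC I) (hJ : IsDCC J) :
    IsDCC {z : ℝ | ∃ x ∈ I, ∃ y ∈ J, z = x * y} := by
  apply dcc_of_isWF
  apply Set.IsPWO.isWF
  suffices ∀ f : ℕ → ℝ, (∀ n, f n ∈ {z : ℝ | ∃ x ∈ I, ∃ y ∈ J, z = x * y}) →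
      ∃ m n, m < n ∧ f m ≤ f n from fun F => this (fun n => F n) (fun n => (F n).2)
  intro f hf
  choose x hx y hy hxy using hf
  obtain ⟨g, hg⟩ := ((isWF_of_dcc hI).isPWO).exists_monotone_subseq hx
  obtain ⟨g', hg'⟩ := ((isWF_of_dcc hJ).isPWO).exists_monotone_subseq (f := y ∘ g)
    (fun n => hy _)
  refine ⟨g (g' 0), g (g' 1), ?_, ?_⟩
  · exact g.strictMono (g'.strictMono one_pos)
  · rw [hxy, hxy]
    exact mul_le_mul (hg.comp g'.monotone (by norm_num)) (hg' (by norm_num : (0:ℕ) ≤ 1))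
      (hJ0 _ (hy _)) (hI0 _ (hx _))
end

section
/- If I ⊆ [0,1] satisfies the ACC, then the set Φ(I) = {1 − r/m : r ∈ I, m a positive integer} satisfies the DCC. -/
theorem dcc_Phi (I : Set ℝ) (hI : I ⊆ Set.Icc 0 1) (hacc : IsACC I) :
    IsDCC {x : ℝ | ∃ r ∈ I, ∃ m : ℕ, 0 < m ∧ x = 1 - r / m} := by
  intro f hf hanti
  -- extract r and m
  choose r hrI m hmpos hfeq using hf
  have hr0 : ∀ n, 0 ≤ r n := fun n => (hI (hrI n)).1
  have hr1 : ∀ n, r n ≤ 1 := fun n => (hI (hrI n)).2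
  have hmR : ∀ n, (0:ℝ) < m n := fun n => by exact_mod_cast hmpos n
  have hfle : ∀ n, f n ≤ 1 := by
    intro n
    rw [hfeq n]
    have : 0 ≤ r n / m n := div_nonneg (hr0 n) (hmR n).le
    linarith
  have hrval : ∀ n, r n = (m n : ℝ) * (1 - f n) := by
    intro n
    have h := (hmR n).ne'
    rw [hfeq n]
    field_simp
    ring
  by_cases hall : ∀ n, f n = 1
  · exact ⟨0, fun n _ => by rw [hall n, hall 0]⟩
  push_neg at hall
  obtain ⟨n0, hn0⟩ := hall
  have hc : 0 < 1 - f n0 := lt_of_le_of_ne (by linarith [hfle n0]) (by intro h; apply hn0; linarith)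
  set c := 1 - f n0 with hcdef
  -- for n ≥ n0, m n is bounded
  set B : ℕ := ⌈1 / c⌉₊ with hBdef
  have hmB : ∀ n, n0 ≤ n → m n ≤ B := by
    intro n hn
    have h1 : f n ≤ f n0 := hanti hn
    have h2 : c ≤ 1 - f n := by linarith
    have h3 : (m n : ℝ) * c ≤ r n := by
      rw [hrval n]
      exact mul_le_mul_of_nonneg_left h2 (hmR n).le
    have h4 : (m n : ℝ) ≤ 1 / c := by
      rw [le_div_iff₀ hc]
      linarith [hr1 n]
    have h5 : (m n : ℝ) ≤ (B : ℝ) := le_trans h4 (Nat.le_ceil _)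
    exact_mod_cast h5
  -- pigeonhole: some M hit infinitely often by m (· + n0)
  have hfin : ∃ M : Fin (B + 1), (fun n => (⟨m (n + n0), Nat.lt_succ_of_le (hmB _ (Nat.le_add_left _ _))⟩ : Fin (B+1))) ⁻¹' {M} |>.Infinite := by
    obtain ⟨M, hM⟩ := Finite.exists_infinite_fiber
      (fun n => (⟨m (n + n0), Nat.lt_succ_of_le (hmB _ (Nat.le_add_left _ _))⟩ : Fin (B+1)))
    exact ⟨M, Set.infinite_coe_iff.mp hM⟩
  obtain ⟨M, hMinf⟩ := hfin
  set p : ℕ → Prop := fun n => m (n + n0) = (M : ℕ) with hpdef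
  have hpinf : (setOf p).Infinite := by
    apply hMinf.mono
    intro n hn
    simp only [Set.mem_preimage, Set.mem_singleton_iff] at hn
    exact congrArg Fin.val hn
  have hnth_mem : ∀ k, p (Nat.nth p k) := fun k => Nat.nth_mem_of_infinite hpinf k
  have hnth_mono : StrictMono (Nat.nth p) := Nat.nth_strictMono hpinf
  have hMpos : (0:ℝ) < (M : ℕ) := by
    have := hmpos (Nat.nth p 0 + n0)
    rw [hnth_mem 0] at this
    exact_mod_cast this
  -- apply ACC to the r-subsequence
  set g : ℕ → ℝ := fun k => r (Nat.nth p k + n0) with hgdef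
  have hgmono : Monotone g := by
    intro k l hkl
    have h1 : Nat.nth p k + n0 ≤ Nat.nth p l + n0 := by
      exact Nat.add_le_add_right (hnth_mono.monotone hkl) n0
    have h2 : f (Nat.nth p l + n0) ≤ f (Nat.nth p k + n0) := hanti h1
    simp only [hgdef]
    rw [hrval, hrval, hnth_mem k, hnth_mem l]
    exact mul_le_mul_of_nonneg_left (by linarith) hMpos.le
  obtain ⟨K, hK⟩ := hacc g (fun k => hrI _) hgmono
  -- f is constant along the subsequence from K onward
  have hfsub : ∀ k, K ≤ k → f (Nat.nth p k + n0) = f (Nat.nth p K + n0) := by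
    intro k hk
    have hg := hK k hk
    rw [hfeq, hfeq, hnth_mem k, hnth_mem K]
    have : r (Nat.nth p k + n0) = r (Nat.nth p K + n0) := hg
    rw [this]
  refine ⟨Nat.nth p K + n0, fun n hn => ?_⟩
  set k := max K n with hkdef
  have h1 : n ≤ Nat.nth p k + n0 :=
    le_trans (le_trans (le_max_right K n) (hnth_mono.le_apply)) (Nat.le_add_right _ _)
  have h2 : f (Nat.nth p k + n0) ≤ f n := hanti h1
  have h3 : f n ≤ f (Nat.nth p K + n0) := hanti hn
  have h4 : f (Nat.nth p k + n0) = f (Nat.nth p K + n0) := hfsub k (le_max_left K n)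
  linarith
end

section
/- The closure (in ℝ) of a set of real numbers satisfying the DCC also satisfies the DCC, provided the set is bounded below. -/
theorem dcc_closure (S : Set ℝ) (hb : BddBelow S) (hS : IsDCC S) :
    IsDCC (closure S) := by
  intro f hf hanti
  by_contra hcon
  push_neg at hcon
  have key : ∀ N : ℕ, ∃ n, N < n ∧ f n < f N := by
    intro N
    obtain ⟨n, hn, hne⟩ := hcon N
    have hlt : f n < f N := lt_of_le_of_ne (hanti hn) hne
    have hne' : N ≠ n := by rintro rfl; exact hne rfl
    exact ⟨n, lt_of_le_of_ne hn hne', hlt⟩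
  let φ : ℕ → ℕ := fun k => Nat.rec 0 (fun _ ih => (key ih).choose) k
  have hφ : ∀ k, f (φ (k+1)) < f (φ k) := fun k => (key (φ k)).choose_spec.2
  set g : ℕ → ℝ := fun k => f (φ k) with hg
  have hgmem : ∀ k, g k ∈ closure S := fun k => hf _
  have hgdec : ∀ k, g (k+1) < g k := hφ
  have hsex : ∀ k : ℕ, ∃ s ∈ S,
      |s - g (2*k+1)| < min (g (2*k) - g (2*k+1)) (g (2*k+1) - g (2*k+2)) / 2 := by
    intro k
    have h1 : g (2*k+1) < g (2*k) := hgdec (2*k)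
    have h2 : g (2*k+2) < g (2*k+1) := hgdec (2*k+1)
    have hpos : 0 < min (g (2*k) - g (2*k+1)) (g (2*k+1) - g (2*k+2)) / 2 := by
      have := lt_min (by linarith : (0:ℝ) < g (2*k) - g (2*k+1))
        (by linarith : (0:ℝ) < g (2*k+1) - g (2*k+2))
      linarith
    obtain ⟨s, hsS, hsd⟩ := Metric.mem_closure_iff.mp (hgmem (2*k+1)) _ hpos
    refine ⟨s, hsS, ?_⟩
    rw [Real.dist_eq, abs_sub_comm] at hsd
    exact hsd
  set s : ℕ → ℝ := fun k => (hsex k).choose with hs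
  have hsS : ∀ k, s k ∈ S := fun k => (hsex k).choose_spec.1
  have hsd : ∀ k, |s k - g (2*k+1)| <
      min (g (2*k) - g (2*k+1)) (g (2*k+1) - g (2*k+2)) / 2 :=
    fun k => (hsex k).choose_spec.2
  have hdec : ∀ k, s (k+1) < s k := by
    intro k
    have e1 : 2*(k+1) = 2*k+2 := by ring
    have hk := hsd k
    have hk1 := hsd (k+1)
    rw [e1, show (2*k+2+1 : ℕ) = 2*k+3 from by ring,
      show (2*k+2+2 : ℕ) = 2*k+4 from by ring] at hk1
    have hm1 : min (g (2*k) - g (2*k+1)) (g (2*k+1) - g (2*k+2)) ≤ g (2*k+1) - g (2*k+2) :=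
      min_le_right _ _
    have hm2 : min (g (2*k+2) - g (2*k+3)) (g (2*k+3) - g (2*k+4)) ≤ g (2*k+2) - g (2*k+3) :=
      min_le_left _ _
    have ha := abs_sub_lt_iff.mp hk
    have hb' := abs_sub_lt_iff.mp hk1
    -- s k > g(2k+1) - (g(2k+1)-g(2k+2))/2 = (g(2k+1)+g(2k+2))/2 > g(2k+2)
    -- s (k+1) < g(2k+3) + (g(2k+2)-g(2k+3))/2 = (g(2k+2)+g(2k+3))/2 < g(2k+2)
    have hg1 : g (2*k+3) < g (2*k+2) := hgdec (2*k+2)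
    linarith [ha.1, ha.2, hb'.1, hb'.2]
  have hanti' : Antitone s := antitone_nat_of_succ_le (fun k => (hdec k).le)
  obtain ⟨N, hN⟩ := hS s hsS hanti'
  have := hN (N+1) (Nat.le_succ N)
  exact absurd this (ne_of_lt (hdec N))
end

section
/- If Λ⁰ is a finite set of real numbers, G is a DCC set of nonnegative reals, and V is a DCC set of positive reals, then there is no strictly increasing sequence (t_i) of positive reals together with g_i ∈ G and v_i ∈ V such that g_i + t_i v_i ∈ Λ⁰ for all i. -/
lemma isDCC_no_strictAnti {S : Set ℝ} (hS : IsDCC S) (f : ℕ → ℝ)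
    (hmem : ∀ n, f n ∈ S) (hf : StrictAnti f) : False := by
  obtain ⟨N, hN⟩ := hS f hmem hf.antitone
  have h1 := hN (N + 1) (Nat.le_succ N)
  have h2 : f (N + 1) < f N := hf (Nat.lt_succ_self N)
  linarith

lemma isDCC_isWF {S : Set ℝ} (hS : IsDCC S) : S.IsWF := by
  rw [Set.isWF_iff_no_descending_seq]
  intro f hf hmem
  exact isDCC_no_strictAnti hS f (fun n => hmem n) hf

theorem no_strict_mono_affine (Λ₀ : Set ℝ) (hΛ₀ : Λ₀.Finite)
    (G : Set ℝ) (hG0 : ∀ x ∈ G, 0 ≤ x) (hG : IsDCC G)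
    (V : Set ℝ) (hVpos : ∀ x ∈ V, 0 < x) (hV : IsDCC V) :
    ¬ ∃ (t : ℕ → ℝ) (g v : ℕ → ℝ), StrictMono t ∧ (∀ i, 0 < t i) ∧
      (∀ i, g i ∈ G) ∧ (∀ i, v i ∈ V) ∧ (∀ i, g i + t i * v i ∈ Λ₀) := by
  rintro ⟨t, g, v, htm, htpos, hgG, hvV, hΛ⟩
  -- pigeonhole: some λ ∈ Λ₀ is hit infinitely often
  have : Finite Λ₀ := hΛ₀
  obtain ⟨lam, hlam⟩ := Finite.exists_infinite_fiber
    (fun i : ℕ => (⟨g i + t i * v i, hΛ i⟩ : Λ₀))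
  set p : ℕ → Prop := fun i => (⟨g i + t i * v i, hΛ i⟩ : Λ₀) = lam with hp
  have hinf : (setOf p).Infinite := by
    rw [Set.infinite_coe_iff] at hlam
    exact hlam
  have hemem : ∀ n, p (Nat.nth p n) := fun n => Nat.nth_mem_of_infinite hinf n
  have hesm : StrictMono (Nat.nth p) := Nat.nth_strictMono hinf
  -- extract a subsequence where v is monotone nondecreasing
  obtain ⟨φ, hφ⟩ := ((isDCC_isWF hV).isPWO).exists_monotone_subseq
    (f := fun n => v (Nat.nth p n)) (fun n => hvV _)
  set e : ℕ → ℕ := fun n => Nat.nth p (φ n) with he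
  have hesm' : StrictMono e := hesm.comp φ.strictMono
  have hval : ∀ n, g (e n) + t (e n) * v (e n) = (lam : ℝ) := by
    intro n
    have := hemem (φ n)
    simpa [hp] using congrArg Subtype.val this
  have hganti : StrictAnti fun n => g (e n) := by
    intro m n hmn
    have h1 : t (e m) < t (e n) := htm (hesm' hmn)
    have h2 : v (e m) ≤ v (e n) := hφ hmn.le
    have h3 : 0 < v (e m) := hVpos _ (hvV _)
    have h4 : 0 < t (e m) := htpos _
    have : t (e m) * v (e m) < t (e n) * v (e n) := by nlinarith
    have hm := hval m
    have hn := hval n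
    simp only []
    linarith
  exact isDCC_no_strictAnti hG _ (fun n => hgG (e n)) hganti
end

section
/- Let Λ ⊆ ℝ be a set of nonnegative reals satisfying the DCC, and suppose (t_i), (λ_i), (λ'_i) are sequences with t_i > 0, λ_i ∈ Λ with λ_i > 0, λ'_i ∈ Λ ∩ [0,1], and 1 − t_i λ_i = λ'_i for all i. Then the set {t_i : i ∈ ℕ} satisfies the ACC; in particular the sequence (t_i) cannot be strictly increasing. -/
/-- If from every index `≥ N` we can jump to a strictly later index with strictly
larger value, we get a strictly increasing subsequence. -/
lemma exists_strictMono_subseq_aux {a : ℕ → ℝ} (N : ℕ)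
    (key : ∀ n, N ≤ n → ∃ m, n < m ∧ a n < a m) :
    ∃ φ : ℕ → ℕ, StrictMono φ ∧ StrictMono (a ∘ φ) := by
  choose F hF1 hF2 using key
  let g : {n // N ≤ n} → {n // N ≤ n} :=
    fun x => ⟨F x.1 x.2, x.2.trans (hF1 x.1 x.2).le⟩
  let φ : ℕ → ℕ := fun k => (g^[k] ⟨N, le_rfl⟩).1
  have hstep : ∀ k, φ k < φ (k + 1) ∧ a (φ k) < a (φ (k + 1)) := by
    intro k
    have h : g^[k + 1] ⟨N, le_rfl⟩ = g (g^[k] ⟨N, le_rfl⟩) :=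
      Function.iterate_succ_apply' g k _
    constructor
    · show φ k < (g^[k+1] ⟨N, le_rfl⟩).1
      rw [h]; exact hF1 _ _
    · show a (φ k) < a (g^[k+1] ⟨N, le_rfl⟩).1
      rw [h]; exact hF2 _ _
  refine ⟨φ, strictMono_nat_of_lt_succ fun k => (hstep k).1,
    strictMono_nat_of_lt_succ fun k => (hstep k).2⟩

/-- Any sequence with values in a DCC set has a monotone (nondecreasing) subsequence. -/
lemma exists_monotone_subseq_of_isDCC {Λ : Set ℝ} (hΛ : IsDCC Λ) (a : ℕ → ℝ)
    (ha : ∀ n, a n ∈ Λ) : ∃ φ : ℕ → ℕ, StrictMono φ ∧ Monotone (a ∘ φ) := by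
  classical
  set p : ℕ → Prop := fun n => ∀ m, n ≤ m → a m ≤ a n with hp
  by_cases hP : (setOf p).Infinite
  · -- infinitely many "peaks": the sequence along peaks is antitone, hence eventually constant
    have hnth_mem : ∀ k, p (Nat.nth p k) := fun k => Nat.nth_mem_of_infinite hP k
    have hnth_mono : StrictMono (Nat.nth p) := Nat.nth_strictMono hP
    have hanti : Antitone (a ∘ Nat.nth p) := by
      intro i j hij
      exact hnth_mem i _ (hnth_mono.monotone hij)
    obtain ⟨M, hM⟩ := hΛ (a ∘ Nat.nth p) (fun n => ha _) hanti
    refine ⟨fun k => Nat.nth p (M + k), hnth_mono.comp fun i j h => by omega, ?_⟩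
    intro i j hij
    simp only [Function.comp_apply]
    rw [show a (Nat.nth p (M + i)) = (a ∘ Nat.nth p) (M + i) from rfl,
      show a (Nat.nth p (M + j)) = (a ∘ Nat.nth p) (M + j) from rfl,
      hM (M + i) (by omega), hM (M + j) (by omega)]
  · -- finitely many peaks: beyond them, we can always strictly increase
    rw [Set.not_infinite] at hP
    obtain ⟨N, hN⟩ : ∃ N, ∀ n, N ≤ n → ¬ p n := by
      rcases hP.bddAbove with ⟨B, hB⟩
      exact ⟨B + 1, fun n hn hpn => by have := hB hpn; omega⟩
    have key : ∀ n, N ≤ n → ∃ m, n < m ∧ a n < a m := by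
      intro n hn
      have h : ¬ ∀ m, n ≤ m → a m ≤ a n := hN n hn
      push_neg at h
      obtain ⟨m, hm, hlt⟩ := h
      exact ⟨m, lt_of_le_of_ne hm (fun h => by subst h; exact lt_irrefl _ hlt), hlt⟩
    obtain ⟨φ, hφ, haφ⟩ := exists_strictMono_subseq_aux N key
    exact ⟨φ, hφ, haφ.monotone⟩

theorem acc_codim_one (Λ : Set ℝ) (hΛ0 : ∀ x ∈ Λ, 0 ≤ x) (hΛ : IsDCC Λ)
    (t l : ℕ → ℝ) (l' : ℕ → ℝ)
    (htpos : ∀ i, 0 < t i)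
    (hl : ∀ i, l i ∈ Λ) (hlpos : ∀ i, 0 < l i)
    (hl' : ∀ i, l' i ∈ Λ ∩ Set.Icc 0 1)
    (heq : ∀ i, 1 - t i * l i = l' i) :
    IsACC {x : ℝ | ∃ i : ℕ, x = t i} ∧ ¬ StrictMono t := by
  have hacc : IsACC {x : ℝ | ∃ i : ℕ, x = t i} := by
    intro f hf hmono
    by_contra hne
    push_neg at hne
    -- from non-eventual-constancy and monotonicity, build a strictly increasing subsequence
    have key : ∀ n, (0 : ℕ) ≤ n → ∃ m, n < m ∧ f n < f m := by
      intro n _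
      obtain ⟨m, hm, hne'⟩ := hne n
      refine ⟨m, lt_of_le_of_ne hm (fun h => by subst h; exact hne' rfl),
        lt_of_le_of_ne (hmono hm) (Ne.symm hne')⟩
    obtain ⟨ψ, hψ, hfψ⟩ := exists_strictMono_subseq_aux 0 key
    -- index the subsequence values by indices of t
    choose g hg using fun k => hf (ψ k)
    -- extract a subsequence along which l is monotone
    obtain ⟨φ₁, hφ₁, hlmono⟩ := exists_monotone_subseq_of_isDCC hΛ (l ∘ g) (fun n => hl _)
    -- and a further one along which l' is monotone
    obtain ⟨φ₂, hφ₂, hl'mono⟩ :=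
      exists_monotone_subseq_of_isDCC hΛ (l' ∘ g ∘ φ₁) (fun n => (hl' _).1)
    set s : ℕ → ℝ := fun k => f (ψ (φ₁ (φ₂ k))) with hs
    set A : ℕ → ℝ := fun k => l (g (φ₁ (φ₂ k))) with hA
    set B : ℕ → ℝ := fun k => l' (g (φ₁ (φ₂ k))) with hB
    have hsval : ∀ k, s k = t (g (φ₁ (φ₂ k))) := fun k => hg _
    have hrel : ∀ k, s k * A k = 1 - B k := by
      intro k
      rw [hsval k]
      have := heq (g (φ₁ (φ₂ k)))
      simp only [hA, hB]
      linarith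
    have hs01 : s 0 < s 1 := hfψ.comp (hφ₁.comp hφ₂) (by norm_num : (0:ℕ) < 1)
    have hs0pos : 0 < s 0 := by rw [hsval 0]; exact htpos _
    have hA01 : A 0 ≤ A 1 := by
      have := hlmono (hφ₂.monotone (by norm_num : (0:ℕ) ≤ 1))
      exact this
    have hA0pos : 0 < A 0 := hlpos _
    have hB01 : B 0 ≤ B 1 := hl'mono (by norm_num : (0:ℕ) ≤ 1)
    have h1 : s 0 * A 0 < s 1 * A 1 :=
      mul_lt_mul hs01 hA01 hA0pos (le_of_lt (hs0pos.trans hs01))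
    rw [hrel 0, hrel 1] at h1
    linarith
  refine ⟨hacc, fun hsm => ?_⟩
  obtain ⟨N, hN⟩ := hacc t (fun i => ⟨i, rfl⟩) hsm.monotone
  have := hN (N + 1) (by omega)
  have := hsm (Nat.lt_succ_self N)
  linarith
end
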